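/- Let f : (0,∞) → ℝ be operator monotone decreasing with f(1) = 0, and let a_f ∈ ℝ be such that −f(x)/x → a_f as x → ∞. Let ρ and σ be positive definite d×d density matrices, let λ_ρ be the largest eigenvalue of ρ and α_σ the smallest eigenvalue of σ, and assume α_σ < λ_ρ. Then the quasi-relative entropy satisfies S_f(ρ‖σ) ≤ ‖ρ−σ‖₁ · √d · [ (λ_ρ/(λ_ρ−α_σ)) · f(α_σ/λ_ρ) − a_f ]. -/

import Mathlib

open Matrix ComplexOrder

/-- The trace norm of a complex matrix: the sum of its singular values,
realized as `Tr √(Aᴴ A)`. -/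
noncomputable def traceNorm {d : ℕ} (A : Matrix (Fin d) (Fin d) ℂ) : ℝ :=
  ((((Matrix.posSemidef_conjTranspose_mul_self A).1.eigenvectorUnitary : Matrix (Fin d) (Fin d) ℂ) *
      Matrix.diagonal (((↑) : ℝ → ℂ) ∘ Real.sqrt ∘ (Matrix.posSemidef_conjTranspose_mul_self A).1.eigenvalues) *
      (star (Matrix.posSemidef_conjTranspose_mul_self A).1.eigenvectorUnitary :
        Matrix (Fin d) (Fin d) ℂ)).trace).re

/-- Functional calculus for a Hermitian matrix: apply `f` to the eigenvalues in an
orthonormal eigenbasis. -/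
noncomputable def matFun {d : ℕ} {A : Matrix (Fin d) (Fin d) ℂ} (hA : A.IsHermitian)
    (f : ℝ → ℝ) : Matrix (Fin d) (Fin d) ℂ :=
  (hA.eigenvectorUnitary : Matrix (Fin d) (Fin d) ℂ) *
    Matrix.diagonal (fun i => (f (hA.eigenvalues i) : ℂ)) *
    (star hA.eigenvectorUnitary : Matrix (Fin d) (Fin d) ℂ)

/-- `f : (0,∞) → ℝ` is operator monotone decreasing: for all positive definite matrices
`A ≤ B` (Loewner order) of any size, `f(B) ≤ f(A)`. -/
def OpMonoDecrOn (f : ℝ → ℝ) : Prop :=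
  ∀ (n : ℕ) (A B : Matrix (Fin n) (Fin n) ℂ) (hA : A.PosDef) (hB : B.PosDef),
    (B - A).PosSemidef → (matFun hA.1 f - matFun hB.1 f).PosSemidef

/-- The quasi-relative entropy `S_f(ρ‖σ) = Σ_{j,k} λ_j f(μ_k/λ_j) |⟨φ_k|ψ_j⟩|²` computed from
spectral decompositions `ρ = Σ_j λ_j |ψ_j⟩⟨ψ_j|`, `σ = Σ_k μ_k |φ_k⟩⟨φ_k|`. -/
noncomputable def quasiRelEntropy {d : ℕ} (f : ℝ → ℝ) {ρ σ : Matrix (Fin d) (Fin d) ℂ}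
    (hρ : ρ.IsHermitian) (hσ : σ.IsHermitian) : ℝ :=
  ∑ j, ∑ k, hρ.eigenvalues j * f (hσ.eigenvalues k / hρ.eigenvalues j) *
    ‖(inner ℂ (hσ.eigenvectorBasis k) (hρ.eigenvectorBasis j) : ℂ)‖ ^ 2

/-- The Umegaki relative entropy `S(ρ‖σ) = Tr(ρ (log ρ − log σ))`. -/
noncomputable def relEntropy {d : ℕ} {ρ σ : Matrix (Fin d) (Fin d) ℂ}
    (hρ : ρ.IsHermitian) (hσ : σ.IsHermitian) : ℝ :=
  ((ρ * (matFun hρ Real.log - matFun hσ Real.log)).trace).re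

/-- The Tsallis relative q-entropy `S_q(ρ‖σ) = (1/(1−q))(1 − Tr(ρ^q σ^{1−q}))`. -/
noncomputable def tsallisEntropy {d : ℕ} (q : ℝ) {ρ σ : Matrix (Fin d) (Fin d) ℂ}
    (hρ : ρ.IsHermitian) (hσ : σ.IsHermitian) : ℝ :=
  (1 / (1 - q)) *
    (1 - ((matFun hρ (fun x => x ^ q) * matFun hσ (fun x => x ^ (1 - q))).trace).re)

section Helpers

@[simp] lemma of_eq_self22 (a b c d : ℂ) : Matrix.of !![a, b; c, d] = !![a, b; c, d] := rfl

lemma diag_comm_of_conj {n : ℕ} {W : Matrix (Fin n) (Fin n) ℂ} {a b : Fin n → ℝ}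
    (h : W * Matrix.diagonal (fun i => (a i : ℂ)) = Matrix.diagonal (fun i => (b i : ℂ)) * W)
    (f : ℝ → ℝ) :
    W * Matrix.diagonal (fun i => (f (a i) : ℂ)) = Matrix.diagonal (fun i => (f (b i) : ℂ)) * W := by
  ext i j
  have hij : W i j * (a j : ℂ) = (b i : ℂ) * W i j := by
    have := congrFun (congrFun h i) j
    simpa [Matrix.mul_diagonal, Matrix.diagonal_mul] using this
  by_cases hW : W i j = 0
  · simp [Matrix.mul_diagonal, Matrix.diagonal_mul, hW]
  · have hz : W i j * ((a j : ℂ) - b i) = 0 := by linear_combination hij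
    have hab : a j = b i := by
      rcases mul_eq_zero.mp hz with h1 | h1
      · exact absurd h1 hW
      · exact_mod_cast sub_eq_zero.mp h1
    simp [Matrix.mul_diagonal, Matrix.diagonal_mul, hab, mul_comm]

lemma matFun_conj {n : ℕ} {A : Matrix (Fin n) (Fin n) ℂ} (hA : A.IsHermitian)
    (U : Matrix (Fin n) (Fin n) ℂ) (hU : U ∈ Matrix.unitaryGroup (Fin n) ℂ)
    (dv : Fin n → ℝ) (h : A = U * Matrix.diagonal (fun i => (dv i : ℂ)) * star U) (f : ℝ → ℝ) :
    matFun hA f = U * Matrix.diagonal (fun i => (f (dv i) : ℂ)) * star U := by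
  set V : Matrix (Fin n) (Fin n) ℂ := (hA.eigenvectorUnitary : Matrix (Fin n) (Fin n) ℂ) with hV
  have hVmem : V ∈ Matrix.unitaryGroup (Fin n) ℂ := hA.eigenvectorUnitary.2
  have hUU : U * star U = 1 := (Matrix.mem_unitaryGroup_iff).mp hU
  have hUU' : star U * U = 1 := (Matrix.mem_unitaryGroup_iff').mp hU
  have hVV : V * star V = 1 := (Matrix.mem_unitaryGroup_iff).mp hVmem
  have hVV' : star V * V = 1 := (Matrix.mem_unitaryGroup_iff').mp hVmem
  have hspec : A = V * Matrix.diagonal (fun i => ((hA.eigenvalues i : ℝ) : ℂ)) * star V := by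
    exact hA.spectral_theorem
  set W : Matrix (Fin n) (Fin n) ℂ := star U * V with hW
  have hWd : W * Matrix.diagonal (fun i => ((hA.eigenvalues i : ℝ) : ℂ))
      = Matrix.diagonal (fun i => (dv i : ℂ)) * W := by
    have h1 : V * Matrix.diagonal (fun i => ((hA.eigenvalues i : ℝ) : ℂ))
        = U * Matrix.diagonal (fun i => (dv i : ℂ)) * star U * V := by
      have := congrArg (fun M => M * V) (hspec.symm.trans h)
      simpa only [mul_assoc, hVV', mul_one] using this
    calc W * Matrix.diagonal (fun i => ((hA.eigenvalues i : ℝ) : ℂ))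
        = star U * (V * Matrix.diagonal (fun i => ((hA.eigenvalues i : ℝ) : ℂ))) := by
          rw [hW, mul_assoc]
      _ = star U * (U * (Matrix.diagonal (fun i => (dv i : ℂ)) * (star U * V))) := by
          rw [h1]; simp only [mul_assoc]
      _ = Matrix.diagonal (fun i => (dv i : ℂ)) * W := by
          rw [← mul_assoc (star U) U, hUU', one_mul, hW]
  have hWf := diag_comm_of_conj hWd f
  have hVU : V = U * W := by rw [hW, ← mul_assoc, hUU, one_mul]
  have hsW : star W = star V * U := by rw [hW, Matrix.star_mul, star_star]
  have hWW : W * star W = 1 := by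
    rw [hsW, hW, mul_assoc, ← mul_assoc V, hVV, one_mul, hUU']
  calc matFun hA f
      = V * Matrix.diagonal (fun i => (f (hA.eigenvalues i) : ℂ)) * star V := rfl
    _ = U * (W * Matrix.diagonal (fun i => (f (hA.eigenvalues i) : ℂ)) * star W) * star U := by
        rw [hVU, Matrix.star_mul]; simp only [mul_assoc]
    _ = U * (Matrix.diagonal (fun i => (f (dv i) : ℂ)) * (W * star W)) * star U := by
        rw [hWf]; simp only [mul_assoc]
    _ = U * Matrix.diagonal (fun i => (f (dv i) : ℂ)) * star U := by
        rw [hWW, mul_one, mul_assoc]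

lemma psd22 (p q r : ℝ) (hp : 0 ≤ p) (hr : 0 ≤ r) (hd : q ^ 2 ≤ p * r) :
    (Matrix.of !![(p : ℂ), (q : ℂ); (q : ℂ), (r : ℂ)]).PosSemidef := by
  refine Matrix.PosSemidef.of_dotProduct_mulVec_nonneg ?_ ?_
  · ext i j
    fin_cases i <;> fin_cases j <;> simp [Matrix.conjTranspose_apply]
  · intro x
    set t := ((starRingEnd ℂ) (x 0) * x 1).re with htdef
    have h0 : (starRingEnd ℂ) (x 0) * x 1 + (starRingEnd ℂ) (x 1) * x 0 = 2 * (t : ℂ) := by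
      have h := Complex.add_conj ((starRingEnd ℂ) (x 0) * x 1)
      rw [_root_.map_mul, Complex.conj_conj] at h
      push_cast at h ⊢
      linear_combination h
    have hx : dotProduct (star x) ((Matrix.of !![(p : ℂ), (q : ℂ); (q : ℂ), (r : ℂ)]) *ᵥ x)
        = ((p * Complex.normSq (x 0) + r * Complex.normSq (x 1) + q * (2 * t) : ℝ) : ℂ) := by
      simp only [dotProduct, of_eq_self22, Matrix.mulVec, Fin.sum_univ_two, Pi.star_apply,
        Matrix.of_apply, Matrix.cons_val', Matrix.cons_val_zero, Matrix.cons_val_one,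
        Matrix.head_cons, Matrix.head_fin_const, Matrix.empty_val', Matrix.cons_val_fin_one,
        RCLike.star_def]
      push_cast
      linear_combination (q : ℂ) * h0 - (p : ℂ) * (Complex.normSq_eq_conj_mul_self (z := x 0))
        - (r : ℂ) * (Complex.normSq_eq_conj_mul_self (z := x 1))
    rw [hx, Complex.zero_le_real]
    set a := ‖x 0‖ with hadef
    set b := ‖x 1‖ with hbdef
    have ha : Complex.normSq (x 0) = a ^ 2 := (Complex.sq_norm _).symm
    have hb : Complex.normSq (x 1) = b ^ 2 := (Complex.sq_norm _).symm
    have ht : |t| ≤ a * b := by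
      calc |t| ≤ ‖(starRingEnd ℂ) (x 0) * x 1‖ := Complex.abs_re_le_norm _
        _ = a * b := by rw [norm_mul, Complex.norm_conj]
    have ha0 : 0 ≤ a := norm_nonneg _
    have hb0 : 0 ≤ b := norm_nonneg _
    rw [ha, hb]
    set u := p * a ^ 2 with hu
    set v := r * b ^ 2 with hv
    have hu0 : 0 ≤ u := mul_nonneg hp (sq_nonneg a)
    have hv0 : 0 ≤ v := mul_nonneg hr (sq_nonneg b)
    have s1 : |q| * (a * b) ≤ Real.sqrt (u * v) := by
      rw [show u * v = (p * r) * (a * b) ^ 2 by rw [hu, hv]; ring]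
      rw [Real.le_sqrt (by positivity) (by positivity)]
      have hq2 : |q| ^ 2 = q ^ 2 := sq_abs q
      nlinarith [sq_nonneg (a * b)]
    have s2 : 2 * Real.sqrt (u * v) ≤ u + v := by
      nlinarith [sq_nonneg (Real.sqrt u - Real.sqrt v), Real.sq_sqrt hu0, Real.sq_sqrt hv0,
        Real.sqrt_mul hu0 v, Real.sqrt_nonneg u, Real.sqrt_nonneg v]
    have s3 : -(|q| * (a * b)) ≤ q * t := by
      have h1 : |q * t| ≤ |q| * (a * b) := by
        rw [abs_mul]
        exact mul_le_mul_of_nonneg_left ht (abs_nonneg q)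
      linarith [neg_le_of_abs_le h1]
    linarith

lemma rot_mem (c s : ℝ) (h1 : c ^ 2 + s ^ 2 = 1) :
    (Matrix.of !![(c : ℂ), -(s : ℂ); (s : ℂ), (c : ℂ)]) ∈ Matrix.unitaryGroup (Fin 2) ℂ := by
  rw [Matrix.mem_unitaryGroup_iff]
  have h1c : (c : ℂ) ^ 2 + (s : ℂ) ^ 2 = 1 := by exact_mod_cast congrArg Complex.ofReal h1
  ext i j
  fin_cases i <;> fin_cases j <;>
    · simp [Matrix.mul_apply, Fin.sum_univ_two, Matrix.one_apply, Matrix.star_apply,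
        Matrix.conjTranspose_apply]
      first
      | linear_combination h1c
      | ring
      | skip

lemma rot_conj (c s d₁ d₂ : ℝ) :
    (Matrix.of !![(c : ℂ), -(s : ℂ); (s : ℂ), (c : ℂ)]) *
        Matrix.diagonal (fun i => ((![d₁, d₂] i : ℝ) : ℂ)) *
        star (Matrix.of !![(c : ℂ), -(s : ℂ); (s : ℂ), (c : ℂ)]) =
      Matrix.of !![((c^2*d₁ + s^2*d₂ : ℝ) : ℂ), ((c*s*(d₁ - d₂) : ℝ) : ℂ);
        ((c*s*(d₁ - d₂) : ℝ) : ℂ), ((s^2*d₁ + c^2*d₂ : ℝ) : ℂ)] := by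
  ext i j
  fin_cases i <;> fin_cases j <;>
    · simp [Matrix.mul_apply, Fin.sum_univ_two, Matrix.diagonal_apply, Matrix.vecMul_diagonal,
        Matrix.star_apply,
        Matrix.conjTranspose_apply]
      push_cast
      ring

lemma quad22 (n00 n01 n11 x0 x1 : ℝ) :
    dotProduct (star ![(x0 : ℂ), (x1 : ℂ)])
        ((Matrix.of !![(n00 : ℂ), (n01 : ℂ); (n01 : ℂ), (n11 : ℂ)]) *ᵥ ![(x0 : ℂ), (x1 : ℂ)]) =
      ((n00*x0^2 + 2*n01*x0*x1 + n11*x1^2 : ℝ) : ℂ) := by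
  simp [dotProduct, Matrix.mulVec, Fin.sum_univ_two]
  push_cast
  ring

lemma kcvx_core {f : ℝ → ℝ} (hf : OpMonoDecrOn f) (a₁ a₂ b₁ b₂ c s : ℝ)
    (ha₁ : 0 < a₁) (ha₂ : 0 < a₂)
    (hcs1 : c ^ 2 + s ^ 2 = 1)
    (hp : 0 ≤ c^2*b₁ + s^2*b₂ - a₁) (hr : 0 ≤ s^2*b₁ + c^2*b₂ - a₂)
    (hdet : (c*s*(b₁ - b₂)) ^ 2 ≤ (c^2*b₁ + s^2*b₂ - a₁) * (s^2*b₁ + c^2*b₂ - a₂)) :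
    f b₁ ≤ c ^ 2 * f a₁ + s ^ 2 * f a₂ := by
  set R := Matrix.of !![(c : ℂ), -(s : ℂ); (s : ℂ), (c : ℂ)] with hR
  have hRU : R ∈ Matrix.unitaryGroup (Fin 2) ℂ := rot_mem c s hcs1
  set A := Matrix.diagonal (fun i => ((![a₁, a₂] i : ℝ) : ℂ)) with hAdef
  set B := R * Matrix.diagonal (fun i => ((![b₁, b₂] i : ℝ) : ℂ)) * star R with hBdef
  have hA : A.PosDef := by
    rw [hAdef, Matrix.posDef_diagonal_iff]
    intro i
    fin_cases i <;> simp [Complex.zero_lt_real, ha₁, ha₂]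
  have hBA : B - A = Matrix.of !![((c^2*b₁ + s^2*b₂ - a₁ : ℝ) : ℂ), ((c*s*(b₁ - b₂) : ℝ) : ℂ);
      ((c*s*(b₁ - b₂) : ℝ) : ℂ), ((s^2*b₁ + c^2*b₂ - a₂ : ℝ) : ℂ)] := by
    rw [hBdef, hR, rot_conj, hAdef]
    ext i j
    fin_cases i <;> fin_cases j <;> simp [Matrix.diagonal] <;> (try push_cast) <;> (try ring)
  have hBApsd : (B - A).PosSemidef := by
    rw [hBA]; exact psd22 _ _ _ hp hr hdet
  have hB : B.PosDef := by
    have := hA.add_posSemidef hBApsd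
    rwa [add_sub_cancel] at this
  have hPSD := hf 2 A B hA hB hBApsd
  have hmA : matFun hA.1 f = Matrix.diagonal (fun i => ((f (![a₁, a₂] i) : ℝ) : ℂ)) := by
    have := matFun_conj hA.1 1 (by rw [Matrix.mem_unitaryGroup_iff]; simp) ![a₁, a₂]
      (by rw [hAdef]; simp) f
    simpa using this
  have hmB : matFun hB.1 f = R * Matrix.diagonal (fun i => ((f (![b₁, b₂] i) : ℝ) : ℂ)) * star R := by
    refine matFun_conj hB.1 R hRU ![b₁, b₂] ?_ f
    rw [hBdef]
  set F₁ := f b₁ with hF₁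
  set F₂ := f b₂ with hF₂
  have hdiff : matFun hA.1 f - matFun hB.1 f =
      Matrix.of !![((f a₁ - (c^2*F₁ + s^2*F₂) : ℝ) : ℂ), ((-(c*s*(F₁ - F₂)) : ℝ) : ℂ);
        ((-(c*s*(F₁ - F₂)) : ℝ) : ℂ), ((f a₂ - (s^2*F₁ + c^2*F₂) : ℝ) : ℂ)] := by
    rw [hmA, hmB]
    have hfb : (fun i => ((f (![b₁, b₂] i) : ℝ) : ℂ)) = (fun i => ((![F₁, F₂] i : ℝ) : ℂ)) := by
      funext i; fin_cases i <;> simp [hF₁, hF₂]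
    rw [hfb, hR, rot_conj]
    ext i j
    fin_cases i <;> fin_cases j <;> simp [Matrix.diagonal] <;> (try push_cast) <;> (try ring)
  have hform := hPSD.dotProduct_mulVec_nonneg ![(c : ℂ), (s : ℂ)]
  rw [hdiff, quad22, Complex.zero_le_real] at hform
  have hE : (f a₁ - (c^2*F₁ + s^2*F₂))*c^2 + 2*(-(c*s*(F₁ - F₂)))*c*s
      + (f a₂ - (s^2*F₁ + c^2*F₂))*s^2 = c^2*f a₁ + s^2*f a₂ - F₁ := by
    linear_combination (-F₁*(c^2 + s^2 + 1))*hcs1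
  linarith [hform, hE]

/-- approximate convexity -/
lemma kcvx {f : ℝ → ℝ} (hf : OpMonoDecrOn f) {a₁ a₂ η w : ℝ}
    (ha₁ : 0 < a₁) (ha₂ : 0 < a₂) (hη : 0 < η) (hw0 : 0 ≤ w) (hw1 : w ≤ 1) :
    f (w * a₁ + (1 - w) * a₂ + η) ≤ w * f a₁ + (1 - w) * f a₂ := by
  set c := Real.sqrt w with hcdef
  set s := Real.sqrt (1 - w) with hsdef
  have hc2 : c ^ 2 = w := Real.sq_sqrt hw0
  have hs2 : s ^ 2 = 1 - w := Real.sq_sqrt (by linarith)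
  have hcs1 : c ^ 2 + s ^ 2 = 1 := by rw [hc2, hs2]; ring
  set b₁ := w * a₁ + (1 - w) * a₂ + η with hb₁
  have hb₁pos : 0 < b₁ := by nlinarith
  obtain ⟨T, hTge, hTη⟩ : ∃ T : ℝ, a₁ + a₂ ≤ T ∧
      (a₁ + a₂ + b₁) ^ 2 + (a₁ + a₂) * η ≤ T * η := by
    refine ⟨(a₁ + a₂ + b₁) ^ 2 / η + (a₁ + a₂), ?_, ?_⟩
    · have : 0 ≤ (a₁ + a₂ + b₁) ^ 2 / η := div_nonneg (sq_nonneg _) hη.le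
      linarith
    · have := div_mul_cancel₀ ((a₁ + a₂ + b₁) ^ 2) (ne_of_gt hη)
      nlinarith [this]
  set b₂ := b₁ + T with hb₂
  have key := kcvx_core hf a₁ a₂ b₁ b₂ c s ha₁ ha₂ hcs1 ?_ ?_ ?_
  · rwa [hc2, hs2] at key
  · rw [hc2, hs2, hb₂, hb₁]
    nlinarith [mul_nonneg (by linarith : (0:ℝ) ≤ 1 - w) (by linarith : 0 ≤ a₂ - a₁ + T)]
  · rw [hc2, hs2, hb₂, hb₁]
    nlinarith [mul_nonneg hw0 (by linarith : 0 ≤ a₁ - a₂ + T)]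
  · have hq2 : (c*s*(b₁ - b₂))^2 = w * (1 - w) * T^2 := by
      have h1 : (c*s)^2 = w*(1-w) := by rw [mul_pow, hc2, hs2]
      rw [hb₂]
      calc (c*s*(b₁ - (b₁ + T)))^2 = (c*s)^2 * T^2 := by ring
        _ = w * (1 - w) * T^2 := by rw [h1]
    rw [hc2, hs2, hq2]
    have e1 : (w*b₁ + (1-w)*(b₁+T) - a₁) * ((1-w)*b₁ + w*(b₁+T) - a₂) - w*(1-w)*T^2
        = (b₁ - a₁) * (b₁ - a₂) + T * η := by
      rw [hb₁]; ring
    have e2 : 0 ≤ (b₁ - a₁) * (b₁ - a₂) + T * η := by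
      nlinarith [ha₁.le, ha₂.le, hb₁pos.le, hη.le, hTη]
    rw [hb₂]
    nlinarith [e1, e2]

/-- f is decreasing on (0, ∞) -/
lemma kdecr {f : ℝ → ℝ} (hf : OpMonoDecrOn f) {x y : ℝ} (hx : 0 < x) (hxy : x ≤ y) :
    f y ≤ f x := by
  rcases eq_or_lt_of_le hxy with h | h
  · rw [h]
  · have h2 := kcvx hf (a₁ := x) (a₂ := x) (η := y - x) (w := 1) hx hx (by linarith)
      zero_le_one le_rfl
    have e : (1:ℝ) * x + (1 - 1) * x + (y - x) = y := by ring
    rw [e] at h2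
    linarith

open Filter in
lemma tendsto_ratio (a b : ℝ) :
    Filter.Tendsto (fun R : ℝ => (R + a) / (R + b)) Filter.atTop (nhds 1) := by
  have hb : Filter.Tendsto (fun R : ℝ => R + b) Filter.atTop Filter.atTop :=
    tendsto_atTop_add_const_right _ b tendsto_id
  have h0 : Filter.Tendsto (fun R : ℝ => (a - b) / (R + b)) Filter.atTop (nhds 0) :=
    Filter.Tendsto.div_atTop tendsto_const_nhds hb
  have h1 : Filter.Tendsto (fun R : ℝ => 1 + (a - b) / (R + b)) Filter.atTop (nhds 1) := by
    simpa using tendsto_const_nhds.add h0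
  refine h1.congr' ?_
  filter_upwards [Filter.eventually_gt_atTop (|b| + 1)] with R hR
  have hRb : R + b ≠ 0 := by
    have : |b| + 1 ≤ |b| + R := by
      have : 1 ≤ R := by nlinarith [abs_nonneg b]
      linarith
    have hbR : -b < R := by nlinarith [neg_abs_le b, abs_nonneg b]
    nlinarith [hbR]
  field_simp
  ring

/-- chord bound on [t,1] -/
lemma chordA {f : ℝ → ℝ} (hf : OpMonoDecrOn f) (hf1 : f 1 = 0) {t x : ℝ}
    (ht0 : 0 < t) (ht1 : t < 1) (hx : t ≤ x) (hx1 : x ≤ 1) :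
    f x ≤ f t / (1 - t) * (1 - x) := by
  have hft : 0 ≤ f t := by
    have := kdecr hf ht0 ht1.le
    rw [hf1] at this; linarith
  set C := f t / (1 - t) with hC
  have hC0 : 0 ≤ C := div_nonneg hft (by linarith)
  rcases eq_or_lt_of_le hx with h | h
  · rw [← h, hC, div_mul_cancel₀ _ (by linarith : (1:ℝ) - t ≠ 0)]
  · refine le_of_forall_pos_le_add fun ε hε => ?_
    set η := min ((x - t)/2) (ε/(C+1)) with hηdef
    have hη : 0 < η := lt_min (by linarith) (div_pos hε (by linarith))
    have hη1 : η < x - t := lt_of_le_of_lt (min_le_left _ _) (by linarith)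
    have hη2 : η ≤ ε/(C+1) := min_le_right _ _
    set w := (1 - x + η)/(1 - t) with hw
    have h1t : (0:ℝ) < 1 - t := by linarith
    have hw0 : 0 ≤ w := div_nonneg (by linarith) h1t.le
    have hw1 : w ≤ 1 := by
      rw [hw, div_le_one h1t]; linarith
    have key := kcvx hf (a₁ := t) (a₂ := 1) ht0 one_pos hη hw0 hw1
    have harg : w * t + (1 - w) * 1 + η = x := by
      rw [hw]; field_simp; ring
    rw [harg, hf1, mul_zero, add_zero] at key
    have hwft : w * f t = C * (1 - x) + C * η := by
      rw [hw, hC]; field_simp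
    have hCη : C * η ≤ ε := by
      calc C * η ≤ C * (ε/(C+1)) := mul_le_mul_of_nonneg_left hη2 hC0
        _ ≤ ε := by
          rw [mul_comm, div_mul_eq_mul_div, div_le_iff₀ (by linarith : (0:ℝ) < C + 1)]
          nlinarith [hε.le, hC0]
    linarith [key, hwft.le, hwft.ge]

lemma afNonneg {f : ℝ → ℝ} (hf : OpMonoDecrOn f) (hf1 : f 1 = 0) {af : ℝ}
    (haf : Filter.Tendsto (fun x : ℝ => -f x / x) Filter.atTop (nhds af)) : 0 ≤ af := by
  refine ge_of_tendsto haf ?_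
  filter_upwards [Filter.eventually_ge_atTop (1:ℝ)] with x hx
  have hfx : f x ≤ 0 := by
    have := kdecr hf one_pos hx
    rw [hf1] at this; linarith
  have hx0 : 0 < x := by linarith
  exact div_nonneg (by linarith) hx0.le

lemma chordB {f : ℝ → ℝ} (hf : OpMonoDecrOn f) (hf1 : f 1 = 0) {af : ℝ}
    (haf : Filter.Tendsto (fun x : ℝ => -f x / x) Filter.atTop (nhds af)) {x : ℝ}
    (hx : 1 ≤ x) : f x ≤ -af * (x - 1) := by
  have haf0 : 0 ≤ af := afNonneg hf hf1 haf
  rcases eq_or_lt_of_le hx with h | h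
  · rw [← h, hf1]; simp
  · refine le_of_forall_pos_le_add fun ε hε => ?_
    set η := min ((x - 1)/2) (ε/(af+1)) with hηdef
    have hη : 0 < η := lt_min (by linarith) (div_pos hε (by linarith))
    have hη1 : η < x - 1 := lt_of_le_of_lt (min_le_left _ _) (by linarith)
    have hη2 : η ≤ ε/(af+1) := min_le_right _ _
    -- step 1: ∀ R > x, f x ≤ (x - 1 - η)/(R - 1) * f R
    have step1 : ∀ R : ℝ, x < R → f x ≤ (x - 1 - η)/(R - 1) * f R := by
      intro R hR
      have hR1 : (0:ℝ) < R - 1 := by linarith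
      set w := (R - x + η)/(R - 1) with hw
      have hw0 : 0 ≤ w := div_nonneg (by linarith) hR1.le
      have hw1 : w ≤ 1 := by rw [hw, div_le_one hR1]; linarith
      have key := kcvx hf (a₁ := 1) (a₂ := R) one_pos (by linarith) hη hw0 hw1
      have harg : w * 1 + (1 - w) * R + η = x := by
        rw [hw]; field_simp; ring
      rw [harg, hf1, mul_zero, zero_add] at key
      have h1w : 1 - w = (x - 1 - η)/(R - 1) := by
        rw [hw]; field_simp; ring
      rwa [h1w] at key
    -- step 2: limit of RHS
    have hlim : Filter.Tendsto (fun R : ℝ => (x - 1 - η)/(R - 1) * f R)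
        Filter.atTop (nhds ((x - 1 - η) * (-af))) := by
      have h1 : Filter.Tendsto (fun R : ℝ => -(-f R / R) * ((R + 0) / (R + (-1))))
          Filter.atTop (nhds (-af * 1)) := (haf.neg).mul (tendsto_ratio 0 (-1))
      have h2 : Filter.Tendsto (fun R : ℝ => (x - 1 - η) * (-(-f R / R) * ((R + 0) / (R + (-1)))))
          Filter.atTop (nhds ((x - 1 - η) * (-af * 1))) := h1.const_mul _
      have h3 : (x - 1 - η) * (-af * 1) = (x - 1 - η) * (-af) := by ring
      rw [h3] at h2
      refine h2.congr' ?_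
      filter_upwards [Filter.eventually_gt_atTop (1:ℝ)] with R hR
      have hR0 : R ≠ 0 := by intro h; rw [h] at hR; linarith
      have hc : -(-f R / R) * ((R + 0) / (R + -1)) = f R / (R - 1) := by
        have h4 : R + -1 = R - 1 := by ring
        rw [add_zero, h4, neg_div, neg_neg, div_mul_div_comm, mul_comm (f R) R,
          mul_div_mul_left _ _ hR0]
      rw [hc]
      ring
    have := ge_of_tendsto hlim (by
      filter_upwards [Filter.eventually_gt_atTop x] with R hR
      exact step1 R hR)
    have hafη : af * η ≤ ε := by
      calc af * η ≤ af * (ε/(af+1)) := mul_le_mul_of_nonneg_left hη2 haf0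
        _ ≤ ε := by
          rw [mul_comm, div_mul_eq_mul_div, div_le_iff₀ (by linarith : (0:ℝ) < af + 1)]
          nlinarith [hε.le, haf0]
    nlinarith [this, hafη]

lemma afLeC {f : ℝ → ℝ} (hf : OpMonoDecrOn f) (hf1 : f 1 = 0) {af : ℝ}
    (haf : Filter.Tendsto (fun x : ℝ => -f x / x) Filter.atTop (nhds af)) {t : ℝ}
    (ht0 : 0 < t) (ht1 : t < 1) : af ≤ f t / (1 - t) := by
  have haf0 : 0 ≤ af := afNonneg hf hf1 haf
  have hft : 0 ≤ f t := by
    have := kdecr hf ht0 ht1.le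
    rw [hf1] at this; linarith
  have main : ∀ η : ℝ, 0 < η → η < 1 - t → af * (1 - η - t) ≤ f t := by
    intro η hη hη1
    have step1 : ∀ R : ℝ, 1 < R → (1 - η - t) * (-f R / R) ≤ f t * ((R - 1 + η) / R) := by
      intro R hR
      have hRt : (0:ℝ) < R - t := by linarith
      have hR0 : (0:ℝ) < R := by linarith
      set w := (R - 1 + η)/(R - t) with hw
      have hw0 : 0 ≤ w := div_nonneg (by linarith) hRt.le
      have hw1 : w ≤ 1 := by rw [hw, div_le_one hRt]; linarith
      have key := kcvx hf (a₁ := t) (a₂ := R) ht0 (by linarith) hη hw0 hw1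
      have harg : w * t + (1 - w) * R + η = 1 := by
        rw [hw]; field_simp; ring
      rw [harg, hf1] at key
      have h1w : 1 - w = (1 - η - t)/(R - t) := by
        rw [hw]; field_simp; ring
      rw [h1w, hw] at key
      -- key : 0 ≤ (R-1+η)/(R-t) * f t + (1-η-t)/(R-t) * f R
      have key2 : 0 ≤ (R - 1 + η) * f t + (1 - η - t) * f R := by
        have hmul := mul_le_mul_of_nonneg_left key hRt.le
        have hexp : (R - t) * ((R - 1 + η)/(R - t) * f t + (1 - η - t)/(R - t) * f R)
            = (R - 1 + η) * f t + (1 - η - t) * f R := by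
          field_simp
        rw [mul_zero, hexp] at hmul
        linarith
      have e1 : (1 - η - t) * (-f R / R) = ((1 - η - t) * (-f R))/R := by ring
      have e2 : f t * ((R - 1 + η) / R) = (f t * (R - 1 + η))/R := by ring
      rw [e1, e2, div_le_div_iff_of_pos_right hR0]
      linarith
    have hL : Filter.Tendsto (fun R : ℝ => (1 - η - t) * (-f R / R))
        Filter.atTop (nhds ((1 - η - t) * af)) := haf.const_mul _
    have hRlim : Filter.Tendsto (fun R : ℝ => f t * ((R - 1 + η) / R))
        Filter.atTop (nhds (f t * 1)) := by
      have h2 : Filter.Tendsto (fun R : ℝ => f t * ((R + (η - 1)) / (R + 0)))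
          Filter.atTop (nhds (f t * 1)) := (tendsto_ratio (η - 1) 0).const_mul _
      refine h2.congr ?_
      intro R
      norm_num
      left
      ring_nf
    have := le_of_tendsto_of_tendsto hL hRlim (by
      filter_upwards [Filter.eventually_gt_atTop (1:ℝ)] with R hR
      exact step1 R hR)
    rw [mul_one] at this
    linarith
  rw [le_div_iff₀ (by linarith : (0:ℝ) < 1 - t)]
  refine le_of_forall_pos_le_add fun ε hε => ?_
  set η := min ((1 - t)/2) (ε/(af+1)) with hηdef
  have hη : 0 < η := lt_min (by linarith) (div_pos hε (by linarith))
  have hη1 : η < 1 - t := lt_of_le_of_lt (min_le_left _ _) (by linarith)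
  have hη2 : η ≤ ε/(af+1) := min_le_right _ _
  have hmain := main η hη hη1
  have hafη : af * η ≤ ε := by
    calc af * η ≤ af * (ε/(af+1)) := mul_le_mul_of_nonneg_left hη2 haf0
      _ ≤ ε := by
        rw [mul_comm, div_mul_eq_mul_div, div_le_iff₀ (by linarith : (0:ℝ) < af + 1)]
        nlinarith [hε.le, haf0]
  nlinarith [hmain, hafη]

lemma trace_conj_pair {d : ℕ} (U V : Matrix (Fin d) (Fin d) ℂ)
    (hU : U ∈ Matrix.unitaryGroup (Fin d) ℂ) (hV : V ∈ Matrix.unitaryGroup (Fin d) ℂ)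
    (a b : Fin d → ℝ) :
    ((U * Matrix.diagonal (fun i => (a i : ℂ)) * star U) *
        (V * Matrix.diagonal (fun i => (b i : ℂ)) * star V)).trace =
      ((∑ j, ∑ k, a j * b k * ‖(star V * U) k j‖ ^ 2 : ℝ) : ℂ) := by
  set M := star V * U with hM
  set Da := Matrix.diagonal (fun i => (a i : ℂ)) with hDa
  set Db := Matrix.diagonal (fun i => (b i : ℂ)) with hDb
  have e : (U * Da * star U) * (V * Db * star V) = (U * Da * star U * V * Db) * star V := by
    simp only [Matrix.mul_assoc]
  rw [e, Matrix.trace_mul_comm]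
  have e2 : star V * (U * Da * star U * V * Db) = M * Da * star M * Db := by
    rw [hM, Matrix.star_mul, star_star]
    simp only [Matrix.mul_assoc]
  rw [e2]
  rw [Matrix.trace]
  push_cast
  rw [Finset.sum_comm]
  apply Finset.sum_congr rfl
  intro k _
  rw [Matrix.diag]
  rw [Matrix.mul_diagonal]
  rw [Matrix.mul_apply]
  rw [Finset.sum_mul]
  apply Finset.sum_congr rfl
  intro j _
  rw [Matrix.mul_diagonal, Matrix.star_apply]
  have hz : M k j * star (M k j) = ((‖M k j‖ : ℝ) : ℂ) ^ 2 := by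
    rw [Complex.star_def, Complex.mul_conj]
    norm_cast
    rw [Complex.normSq_eq_norm_sq]
  calc M k j * (a j : ℂ) * star (M k j) * (b k : ℂ)
      = (M k j * star (M k j)) * (a j : ℂ) * (b k : ℂ) := by ring
    _ = (a j : ℂ) * (b k : ℂ) * ((‖M k j‖ : ℝ) : ℂ) ^ 2 := by rw [hz]; ring

lemma row_sum_one {d : ℕ} {M : Matrix (Fin d) (Fin d) ℂ}
    (h : M * star M = 1) (k : Fin d) : ∑ j, ‖M k j‖ ^ 2 = 1 := by
  have h1 := congrFun (congrFun (congrArg (fun A => A) h) k) k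
  simp only [Matrix.mul_apply, Matrix.star_apply, Matrix.one_apply_eq] at h1
  have h2 : ((∑ j, ‖M k j‖ ^ 2 : ℝ) : ℂ) = 1 := by
    push_cast
    rw [← h1]
    apply Finset.sum_congr rfl
    intro j _
    rw [Complex.star_def, Complex.mul_conj]
    norm_cast
    rw [Complex.normSq_eq_norm_sq]
  exact_mod_cast h2

lemma col_sum_one {d : ℕ} {M : Matrix (Fin d) (Fin d) ℂ}
    (h : star M * M = 1) (j : Fin d) : ∑ k, ‖M k j‖ ^ 2 = 1 := by
  have h1 := congrFun (congrFun (congrArg (fun A => A) h) j) j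
  simp only [Matrix.mul_apply, Matrix.star_apply, Matrix.one_apply_eq] at h1
  have h2 : ((∑ k, ‖M k j‖ ^ 2 : ℝ) : ℂ) = 1 := by
    push_cast
    rw [← h1]
    apply Finset.sum_congr rfl
    intro k _
    rw [Complex.star_def]
    rw [mul_comm, Complex.mul_conj]
    norm_cast
    rw [Complex.normSq_eq_norm_sq]
  exact_mod_cast h2

lemma trace_conj_single {d : ℕ} (U : Matrix (Fin d) (Fin d) ℂ)
    (hU' : star U * U = 1) (a : Fin d → ℝ) :
    ((U * Matrix.diagonal (fun i => (a i : ℂ)) * star U)).trace = ((∑ j, a j : ℝ) : ℂ) := by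
  rw [Matrix.trace_mul_comm, ← Matrix.mul_assoc, hU', Matrix.one_mul, Matrix.trace_diagonal]
  push_cast
  rfl

lemma traceNorm_herm {d : ℕ} {X : Matrix (Fin d) (Fin d) ℂ} (hX : X.IsHermitian) :
    traceNorm X = ∑ i, |hX.eigenvalues i| := by
  set U : Matrix (Fin d) (Fin d) ℂ := (hX.eigenvectorUnitary : Matrix (Fin d) (Fin d) ℂ) with hU
  have hUmem : U ∈ Matrix.unitaryGroup (Fin d) ℂ := hX.eigenvectorUnitary.2
  have hUU : U * star U = 1 := (Matrix.mem_unitaryGroup_iff).mp hUmem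
  have hUU' : star U * U = 1 := (Matrix.mem_unitaryGroup_iff').mp hUmem
  set ν := hX.eigenvalues with hν
  set S := U * Matrix.diagonal (fun i => ((|ν i| : ℝ) : ℂ)) * star U with hS
  have hSpsd : S.PosSemidef := by
    have hd : Matrix.PosSemidef (Matrix.diagonal (fun i => ((|ν i| : ℝ) : ℂ))) := by
      apply Matrix.PosSemidef.diagonal
      intro i
      exact Complex.zero_le_real.mpr (abs_nonneg _)
    have h2 := hd.mul_mul_conjTranspose_same U
    rw [hS, Matrix.star_eq_conjTranspose]
    exact h2
  have hspec : X = U * Matrix.diagonal (fun i => ((ν i : ℝ) : ℂ)) * star U := by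
    exact hX.spectral_theorem
  have hcollapse : ∀ g : Fin d → ℝ,
      (U * Matrix.diagonal (fun i => ((g i : ℝ) : ℂ)) * star U) *
        (U * Matrix.diagonal (fun i => ((g i : ℝ) : ℂ)) * star U) =
      U * Matrix.diagonal (fun i => ((g i : ℝ) : ℂ) * ((g i : ℝ) : ℂ)) * star U := by
    intro g
    calc (U * Matrix.diagonal (fun i => ((g i : ℝ) : ℂ)) * star U) *
          (U * Matrix.diagonal (fun i => ((g i : ℝ) : ℂ)) * star U)
        = U * (Matrix.diagonal (fun i => ((g i : ℝ) : ℂ)) * (star U * U) *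
            Matrix.diagonal (fun i => ((g i : ℝ) : ℂ))) * star U := by
          simp only [Matrix.mul_assoc]
      _ = U * Matrix.diagonal (fun i => ((g i : ℝ) : ℂ) * ((g i : ℝ) : ℂ)) * star U := by
          rw [hUU', Matrix.mul_one, Matrix.diagonal_mul_diagonal]
  have hsq : S ^ 2 = Xᴴ * X := by
    rw [hX.eq, pow_two, hS, hspec, hcollapse, hcollapse]
    have e3 : (fun i => ((|ν i| : ℝ) : ℂ) * ((|ν i| : ℝ) : ℂ))
        = (fun i => ((ν i : ℝ) : ℂ) * ((ν i : ℝ) : ℂ)) := by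
      funext i
      norm_cast
      exact abs_mul_abs_self (ν i)
    rw [e3]
  have hA := (Matrix.posSemidef_conjTranspose_mul_self X).1
  have hXX : Xᴴ * X = U * Matrix.diagonal (fun i => ((ν i * ν i : ℝ) : ℂ)) * star U := by
    rw [hX.eq, hspec, hcollapse]
    simp only [Complex.ofReal_mul]
  have hm := matFun_conj hA U hUmem (fun i => ν i * ν i) hXX Real.sqrt
  have htn : traceNorm X = (matFun hA Real.sqrt).trace.re := rfl
  rw [htn, hm, trace_conj_single U hUU', Complex.ofReal_re]
  exact Finset.sum_congr rfl fun i _ => Real.sqrt_mul_self_eq_abs (ν i)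

lemma sum_one_norm {d : ℕ} (a b : Fin d → ℝ) :
    ∑ j, ∑ k, a j * b k * ‖(1 : Matrix (Fin d) (Fin d) ℂ) k j‖ ^ 2 = ∑ j, a j * b j := by
  apply Finset.sum_congr rfl
  intro j _
  rw [Finset.sum_eq_single j]
  · simp [Matrix.one_apply]
  · intro k _ hk
    simp [Matrix.one_apply, Ne.symm hk, hk]
  · intro h
    exact absurd (Finset.mem_univ j) h


end Helpers

/-- dimension-dependent upper continuity bound on the quasi-relative entropy. -/
theorem quasiRelEntropy_le_sqrt_dim (f : ℝ → ℝ) (af : ℝ)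
    (hf : OpMonoDecrOn f) (hf1 : f 1 = 0)
    (haf : Filter.Tendsto (fun x : ℝ => -f x / x) Filter.atTop (nhds af))
    (d : ℕ) (ρ σ : Matrix (Fin d) (Fin d) ℂ) (hρ : ρ.PosDef) (hσ : σ.PosDef)
    (hρtr : ρ.trace = 1) (hσtr : σ.trace = 1)
    (lρ aσ : ℝ)
    (hl : IsGreatest (Set.range hρ.1.eigenvalues) lρ)
    (ha : IsLeast (Set.range hσ.1.eigenvalues) aσ)
    (hlt : aσ < lρ) :
    quasiRelEntropy f hρ.1 hσ.1 ≤
      traceNorm (ρ - σ) * Real.sqrt d * (lρ / (lρ - aσ) * f (aσ / lρ) - af) := by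
  classical
  -- eigen-data
  set lam := hρ.1.eigenvalues with hlam
  set mu := hσ.1.eigenvalues with hmu
  have hlampos : ∀ j, 0 < lam j := fun j => hρ.eigenvalues_pos j
  have hmupos : ∀ k, 0 < mu k := fun k => hσ.eigenvalues_pos k
  set U : Matrix (Fin d) (Fin d) ℂ := (hρ.1.eigenvectorUnitary : Matrix (Fin d) (Fin d) ℂ)
    with hUdef
  set V : Matrix (Fin d) (Fin d) ℂ := (hσ.1.eigenvectorUnitary : Matrix (Fin d) (Fin d) ℂ)
    with hVdef
  have hUmem : U ∈ Matrix.unitaryGroup (Fin d) ℂ := hρ.1.eigenvectorUnitary.2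
  have hVmem : V ∈ Matrix.unitaryGroup (Fin d) ℂ := hσ.1.eigenvectorUnitary.2
  have hUU : U * star U = 1 := (Matrix.mem_unitaryGroup_iff).mp hUmem
  have hUU' : star U * U = 1 := (Matrix.mem_unitaryGroup_iff').mp hUmem
  have hVV : V * star V = 1 := (Matrix.mem_unitaryGroup_iff).mp hVmem
  have hVV' : star V * V = 1 := (Matrix.mem_unitaryGroup_iff').mp hVmem
  set M : Matrix (Fin d) (Fin d) ℂ := star V * U with hMdef
  have hMM : M * star M = 1 := by
    rw [hMdef, Matrix.star_mul, star_star]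
    calc star V * U * (star U * V) = star V * (U * star U) * V := by simp only [Matrix.mul_assoc]
      _ = 1 := by rw [hUU, Matrix.mul_one, hVV']
  have hMM' : star M * M = 1 := by
    rw [hMdef, Matrix.star_mul, star_star]
    calc star U * V * (star V * U) = star U * (V * star V) * U := by simp only [Matrix.mul_assoc]
      _ = 1 := by rw [hVV, Matrix.mul_one, hUU']
  set w : Fin d → Fin d → ℝ := fun j k => ‖M k j‖ ^ 2 with hwdef
  have hw0 : ∀ j k, 0 ≤ w j k := fun j k => sq_nonneg _
  have hrow : ∀ j, ∑ k, w j k = 1 := fun j => col_sum_one hMM' j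
  have hcol : ∀ k, ∑ j, w j k = 1 := fun k => row_sum_one hMM k
  -- spectral decompositions
  have hspecρ : ρ = U * Matrix.diagonal (fun i => ((lam i : ℝ) : ℂ)) * star U := by
    exact hρ.1.spectral_theorem
  have hspecσ : σ = V * Matrix.diagonal (fun i => ((mu i : ℝ) : ℂ)) * star V := by
    exact hσ.1.spectral_theorem
  -- sums of eigenvalues are 1
  have hsumlam : ∑ j, lam j = 1 := by
    have := trace_conj_single U hUU' lam
    rw [← hspecρ, hρtr] at this
    exact_mod_cast this.symm
  have hsummu : ∑ k, mu k = 1 := by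
    have := trace_conj_single V hVV' mu
    rw [← hspecσ, hσtr] at this
    exact_mod_cast this.symm
  -- scalar bounds
  obtain ⟨k0, hk0⟩ := ha.1
  have haσpos : 0 < aσ := hk0 ▸ hmupos k0
  have hlρpos : 0 < lρ := lt_trans haσpos hlt
  set t := aσ / lρ with htdef
  have ht0 : 0 < t := div_pos haσpos hlρpos
  have ht1 : t < 1 := (div_lt_one hlρpos).mpr hlt
  set C := f t / (1 - t) with hCdef
  have hCaf : af ≤ C := afLeC hf hf1 haf ht0 ht1
  have hlamle : ∀ j, lam j ≤ lρ := fun j => hl.2 ⟨j, rfl⟩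
  have hmuge : ∀ k, aσ ≤ mu k := fun k => ha.2 ⟨k, rfl⟩
  -- pointwise bound
  have hpoint : ∀ j k, lam j * f (mu k / lam j) ≤
      (C - af)/2 * |lam j - mu k| + (C + af)/2 * (lam j - mu k) := by
    intro j k
    have hlj := hlampos j
    have hmk := hmupos k
    set x := mu k / lam j with hxdef
    have hxt : t ≤ x := by
      rw [htdef, hxdef, div_le_div_iff₀ hlρpos hlj]
      exact mul_le_mul (hmuge k) (hlamle j) hlj.le hmk.le
    rcases le_or_gt x 1 with hx1 | hx1
    · -- x ≤ 1 : chord bound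
      have hb := chordA hf hf1 ht0 ht1 hxt hx1
      have h2 : lam j * f x ≤ lam j * (C * (1 - x)) :=
        mul_le_mul_of_nonneg_left (by rw [hCdef]; exact hb) hlj.le
      have h3 : lam j * (C * (1 - x)) = C * (lam j - mu k) := by
        rw [hxdef]
        field_simp
        try ring
      have hy : 0 ≤ lam j - mu k := by
        have := (div_le_one hlj).mp hx1
        linarith
      rw [abs_of_nonneg hy]
      rw [h3] at h2
      linarith
    · -- x ≥ 1
      have hb := chordB hf hf1 haf hx1.le
      have h2 : lam j * f x ≤ lam j * (-af * (x - 1)) :=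
        mul_le_mul_of_nonneg_left hb hlj.le
      have h3 : lam j * (-af * (x - 1)) = af * (lam j - mu k) := by
        rw [hxdef]
        field_simp
        try ring
      have hy : lam j - mu k ≤ 0 := by
        have := (one_lt_div hlj).mp hx1
        linarith
      rw [abs_of_nonpos hy]
      rw [h3] at h2
      linarith
  -- the inner products are entries of M
  have hinner : ∀ j k, ‖(inner ℂ (hσ.1.eigenvectorBasis k) (hρ.1.eigenvectorBasis j) : ℂ)‖ ^ 2
      = w j k := by
    intro j k
    have : (inner ℂ (hσ.1.eigenvectorBasis k) (hρ.1.eigenvectorBasis j) : ℂ) = M k j := by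
      rw [hMdef, hUdef, hVdef]
      rw [Matrix.mul_apply]
      rw [PiLp.inner_apply]
      apply Finset.sum_congr rfl
      intro a _
      rw [Matrix.star_apply, Matrix.IsHermitian.eigenvectorUnitary_apply,
        Matrix.IsHermitian.eigenvectorUnitary_apply]
      exact RCLike.inner_apply' _ _
    rw [this]
  -- rewrite quasiRelEntropy
  have hS : quasiRelEntropy f hρ.1 hσ.1 = ∑ j, ∑ k, lam j * f (mu k / lam j) * w j k := by
    rw [quasiRelEntropy]
    apply Finset.sum_congr rfl
    intro j _
    apply Finset.sum_congr rfl
    intro k _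
    rw [hinner j k]
  -- sum bound
  have hsum1 : quasiRelEntropy f hρ.1 hσ.1 ≤
      ∑ j, ∑ k, ((C - af)/2 * |lam j - mu k| + (C + af)/2 * (lam j - mu k)) * w j k := by
    rw [hS]
    apply Finset.sum_le_sum
    intro j _
    apply Finset.sum_le_sum
    intro k _
    exact mul_le_mul_of_nonneg_right (hpoint j k) (hw0 j k)
  set T1 := ∑ j, ∑ k, |lam j - mu k| * w j k with hT1
  set T2 := ∑ j, ∑ k, (lam j - mu k) * w j k with hT2
  have hsplit : ∑ j, ∑ k, ((C - af)/2 * |lam j - mu k| + (C + af)/2 * (lam j - mu k)) * w j k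
      = (C - af)/2 * T1 + (C + af)/2 * T2 := by
    rw [hT1, hT2, Finset.mul_sum, Finset.mul_sum, ← Finset.sum_add_distrib]
    apply Finset.sum_congr rfl
    intro j _
    rw [Finset.mul_sum, Finset.mul_sum, ← Finset.sum_add_distrib]
    apply Finset.sum_congr rfl
    intro k _
    ring
  have hT2zero : T2 = 0 := by
    rw [hT2]
    have e1 : ∀ j, ∑ k, (lam j - mu k) * w j k = lam j - ∑ k, mu k * w j k := by
      intro j
      rw [show ∑ k, (lam j - mu k) * w j k = lam j * (∑ k, w j k) - ∑ k, mu k * w j k by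
        rw [Finset.mul_sum, ← Finset.sum_sub_distrib]
        apply Finset.sum_congr rfl
        intro k _
        ring]
      rw [hrow j, mul_one]
    calc ∑ j, ∑ k, (lam j - mu k) * w j k = ∑ j, (lam j - ∑ k, mu k * w j k) := by
          exact Finset.sum_congr rfl fun j _ => e1 j
      _ = (∑ j, lam j) - ∑ j, ∑ k, mu k * w j k := Finset.sum_sub_distrib _ _
      _ = 1 - ∑ k, ∑ j, mu k * w j k := by rw [hsumlam, Finset.sum_comm]
      _ = 1 - ∑ k, mu k * ∑ j, w j k := by
          congr 1
          exact Finset.sum_congr rfl fun k _ => (Finset.mul_sum _ _ _).symm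
      _ = 1 - ∑ k, mu k := by
          congr 1
          exact Finset.sum_congr rfl fun k _ => by rw [hcol k, mul_one]
      _ = 0 := by rw [hsummu]; ring
  -- Frobenius identity
  set X := ρ - σ with hXdef
  have hXh : X.IsHermitian := hρ.1.sub hσ.1
  set ν := hXh.eigenvalues with hν
  set W : Matrix (Fin d) (Fin d) ℂ := (hXh.eigenvectorUnitary : Matrix (Fin d) (Fin d) ℂ)
    with hWdef
  have hWmem : W ∈ Matrix.unitaryGroup (Fin d) ℂ := hXh.eigenvectorUnitary.2
  have hWW' : star W * W = 1 := (Matrix.mem_unitaryGroup_iff').mp hWmem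
  have hspecX : X = W * Matrix.diagonal (fun i => ((ν i : ℝ) : ℂ)) * star W := by
    exact hXh.spectral_theorem
  have hcross : (ρ * σ).trace = ((∑ j, ∑ k, lam j * mu k * w j k : ℝ) : ℂ) := by
    rw [hspecρ, hspecσ]
    exact trace_conj_pair U V hUmem hVmem lam mu
  have hρρ : (ρ * ρ).trace = ((∑ j, lam j * lam j : ℝ) : ℂ) := by
    rw [hspecρ, trace_conj_pair U U hUmem hUmem lam lam, hUU', sum_one_norm]
  have hσσ : (σ * σ).trace = ((∑ k, mu k * mu k : ℝ) : ℂ) := by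
    rw [hspecσ, trace_conj_pair V V hVmem hVmem mu mu, hVV', sum_one_norm]
  have hXX : (X * X).trace = ((∑ i, ν i * ν i : ℝ) : ℂ) := by
    rw [hspecX, trace_conj_pair W W hWmem hWmem ν ν, hWW', sum_one_norm]
  have hXXexp : (X * X).trace =
      (ρ * ρ).trace - (ρ * σ).trace - (σ * ρ).trace + (σ * σ).trace := by
    rw [hXdef, Matrix.sub_mul, Matrix.mul_sub, Matrix.mul_sub, Matrix.trace_sub,
      Matrix.trace_sub, Matrix.trace_sub]
    ring
  have hσρ : (σ * ρ).trace = (ρ * σ).trace := Matrix.trace_mul_comm σ ρ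
  have hreal : ∑ i, ν i * ν i =
      (∑ j, lam j * lam j) + (∑ k, mu k * mu k) - 2 * ∑ j, ∑ k, lam j * mu k * w j k := by
    have hcplx : ((∑ i, ν i * ν i : ℝ) : ℂ) =
        (((∑ j, lam j * lam j) + (∑ k, mu k * mu k)
          - 2 * ∑ j, ∑ k, lam j * mu k * w j k : ℝ) : ℂ) := by
      rw [← hXX, hXXexp, hρρ, hσσ, hσρ, hcross]
      push_cast
      ring
    exact_mod_cast hcplx
  set F := ∑ j, ∑ k, (lam j - mu k) ^ 2 * w j k with hFdef
  have hFeq : F = ∑ i, ν i * ν i := by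
    have hA1 : ∑ j, ∑ k, lam j ^ 2 * w j k = ∑ j, lam j * lam j := by
      apply Finset.sum_congr rfl
      intro j _
      rw [← Finset.mul_sum, hrow j]
      ring
    have hA2 : ∑ j, ∑ k, mu k ^ 2 * w j k = ∑ k, mu k * mu k := by
      rw [Finset.sum_comm]
      apply Finset.sum_congr rfl
      intro k _
      rw [← Finset.mul_sum, hcol k]
      ring
    have hexp : F = (∑ j, ∑ k, lam j ^ 2 * w j k) + (∑ j, ∑ k, mu k ^ 2 * w j k)
        - 2 * ∑ j, ∑ k, lam j * mu k * w j k := by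
      rw [hFdef, Finset.mul_sum, ← Finset.sum_add_distrib, ← Finset.sum_sub_distrib]
      apply Finset.sum_congr rfl
      intro j _
      rw [Finset.mul_sum, ← Finset.sum_add_distrib, ← Finset.sum_sub_distrib]
      apply Finset.sum_congr rfl
      intro k _
      ring
    rw [hexp, hA1, hA2, hreal]
  -- Cauchy-Schwarz
  have hT1nonneg : 0 ≤ T1 := by
    rw [hT1]
    apply Finset.sum_nonneg
    intro j _
    apply Finset.sum_nonneg
    intro k _
    exact mul_nonneg (abs_nonneg _) (hw0 j k)
  have hCS : T1 ^ 2 ≤ d * F := by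
    have h := Finset.sum_mul_sq_le_sq_mul_sq Finset.univ
      (fun p : Fin d × Fin d => ‖M p.2 p.1‖)
      (fun p : Fin d × Fin d => ‖M p.2 p.1‖ * |lam p.1 - mu p.2|)
    have e1 : ∑ p : Fin d × Fin d, (‖M p.2 p.1‖ * (‖M p.2 p.1‖ * |lam p.1 - mu p.2|)) = T1 := by
      rw [hT1, Fintype.sum_prod_type]
      apply Finset.sum_congr rfl
      intro j _
      apply Finset.sum_congr rfl
      intro k _
      rw [hwdef]
      ring
    have e2 : ∑ p : Fin d × Fin d, ‖M p.2 p.1‖ ^ 2 = (d : ℝ) := by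
      rw [Fintype.sum_prod_type]
      have : ∀ j : Fin d, ∑ k, ‖M k j‖ ^ 2 = 1 := fun j => hrow j
      rw [Finset.sum_congr rfl fun j _ => this j]
      simp
    have e3 : ∑ p : Fin d × Fin d, (‖M p.2 p.1‖ * |lam p.1 - mu p.2|) ^ 2 = F := by
      rw [hFdef, Fintype.sum_prod_type]
      apply Finset.sum_congr rfl
      intro j _
      apply Finset.sum_congr rfl
      intro k _
      rw [hwdef, mul_pow, sq_abs]
      ring
    rw [e1, e2, e3] at h
    exact h
  -- trace norm
  have htn : traceNorm X = ∑ i, |ν i| := traceNorm_herm hXh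
  have htn0 : 0 ≤ traceNorm X := by
    rw [htn]
    exact Finset.sum_nonneg fun i _ => abs_nonneg _
  have hνbound : ∑ i, ν i * ν i ≤ (traceNorm X) ^ 2 := by
    rw [htn]
    have : ∀ i : Fin d, ν i * ν i = |ν i| ^ 2 := by
      intro i
      rw [sq_abs]
      ring
    rw [Finset.sum_congr rfl fun i _ => this i]
    exact Finset.sum_sq_le_sq_sum_of_nonneg fun i _ => abs_nonneg _
  have hT1bound : T1 ≤ Real.sqrt d * traceNorm X := by
    have h1 : T1 ^ 2 ≤ (d : ℝ) * (traceNorm X) ^ 2 := by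
      calc T1 ^ 2 ≤ d * F := hCS
        _ ≤ (d : ℝ) * (traceNorm X) ^ 2 := by
          apply mul_le_mul_of_nonneg_left _ (Nat.cast_nonneg d)
          rw [hFeq]
          exact hνbound
    calc T1 = Real.sqrt (T1 ^ 2) := (Real.sqrt_sq hT1nonneg).symm
      _ ≤ Real.sqrt ((d : ℝ) * (traceNorm X) ^ 2) := Real.sqrt_le_sqrt h1
      _ = Real.sqrt d * traceNorm X := by
        rw [Real.sqrt_mul (Nat.cast_nonneg d), Real.sqrt_sq htn0]
  -- final assembly
  have hCeq : lρ / (lρ - aσ) * f t = C := by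
    rw [hCdef]
    have h1 : (1 : ℝ) - t = (lρ - aσ)/lρ := by
      rw [htdef]
      field_simp
    rw [h1, div_div_eq_mul_div]
    ring
  have hfinal : quasiRelEntropy f hρ.1 hσ.1 ≤ (C - af)/2 * T1 := by
    calc quasiRelEntropy f hρ.1 hσ.1
        ≤ ∑ j, ∑ k, ((C - af)/2 * |lam j - mu k| + (C + af)/2 * (lam j - mu k)) * w j k :=
          hsum1
      _ = (C - af)/2 * T1 + (C + af)/2 * T2 := hsplit
      _ = (C - af)/2 * T1 := by rw [hT2zero]; ring
  have hCaf0 : 0 ≤ C - af := by linarith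
  calc quasiRelEntropy f hρ.1 hσ.1 ≤ (C - af)/2 * T1 := hfinal
    _ ≤ (C - af)/2 * (Real.sqrt d * traceNorm X) :=
        mul_le_mul_of_nonneg_left hT1bound (by linarith)
    _ ≤ (C - af) * (Real.sqrt d * traceNorm X) := by
        apply mul_le_mul_of_nonneg_right _ (mul_nonneg (Real.sqrt_nonneg _) htn0)
        linarith
    _ = traceNorm X * Real.sqrt d * (C - af) := by ring
    _ = traceNorm (ρ - σ) * Real.sqrt d * (lρ / (lρ - aσ) * f t - af) := by
        rw [hCeq, hXdef]
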